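/- If A and B are positive semi-definite operators on a finite-dimensional real inner product space, then A(A+B)⁺B = B(A+B)⁺A, and this operator is self-adjoint. -/

import Mathlib

open LinearMap

/-- A symmetric psd operator with `⟪x, A x⟫ = 0` kills `x`. -/
lemma psd_apply_eq_zero {V : Type*} [NormedAddCommGroup V] [InnerProductSpace ℝ V]
    (A : V →ₗ[ℝ] V) (hA : A.IsSymmetric) (hpsd : ∀ x : V, 0 ≤ (inner ℝ x (A x) : ℝ))
    (x : V) (hx : (inner ℝ x (A x) : ℝ) = 0) : A x = 0 := by
  set c : ℝ := ‖A x‖ ^ 2 with hc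
  set a : ℝ := (inner ℝ (A x) (A (A x)) : ℝ) with ha'
  have key : ∀ t : ℝ, 0 ≤ 2 * t * c + t ^ 2 * a := by
    intro t
    have h0 := hpsd (x + t • A x)
    have hsym : (inner ℝ x (A (A x)) : ℝ) = inner ℝ (A x) (A x) := (hA x (A x)).symm
    have hn : (inner ℝ (A x) (A x) : ℝ) = c := by
      rw [hc, real_inner_self_eq_norm_sq]
    have e : (inner ℝ (x + t • A x) (A (x + t • A x)) : ℝ)
        = inner ℝ x (A x) + 2 * t * c + t ^ 2 * a := by
      simp only [map_add, map_smul, inner_add_left, inner_add_right,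
        real_inner_smul_left, real_inner_smul_right, hsym, real_inner_comm (A x) x, hn, ha']
      ring
    rw [e, hx] at h0
    linarith
  have ha : 0 ≤ a := hpsd (A x)
  have hcnn : 0 ≤ c := by positivity
  have ha1 : (0:ℝ) < a + 1 := by linarith
  have h := key (-(c / (a + 1)))
  set d : ℝ := c / (a + 1) with hd'
  have hcd : c = d * (a + 1) := by
    rw [hd']; field_simp
  have hd2 : d ^ 2 ≤ 0 := by nlinarith [h, hcd, ha, sq_nonneg d, mul_nonneg (sq_nonneg d) ha]
  have hdz : d = 0 := by
    have : d ^ 2 = 0 := le_antisymm hd2 (sq_nonneg d)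
    exact pow_eq_zero_iff (by norm_num) |>.mp this
  have hc0 : c = 0 := by rw [hcd, hdz, zero_mul]
  have hn0 : ‖A x‖ = 0 := by
    rw [hc] at hc0
    nlinarith [norm_nonneg (A x)]
  simpa using hn0

/-- `G` is the Moore-Penrose pseudo-inverse of `L` (Penrose conditions;
adjoint-symmetry of `L ∘ G` and `G ∘ L` expressed via `IsSymmetric`). -/
def IsMoorePenrose {V : Type*} [NormedAddCommGroup V] [InnerProductSpace ℝ V]
    (L G : V →ₗ[ℝ] V) : Prop :=
  L ∘ₗ (G ∘ₗ L) = L ∧ G ∘ₗ (L ∘ₗ G) = G ∧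
  (L ∘ₗ G).IsSymmetric ∧ (G ∘ₗ L).IsSymmetric

theorem parallelSum_symm {V : Type*} [NormedAddCommGroup V] [InnerProductSpace ℝ V]
    [FiniteDimensional ℝ V] (A B : V →ₗ[ℝ] V)
    (hA : A.IsSymmetric) (hB : B.IsSymmetric)
    (hApsd : ∀ x : V, 0 ≤ (inner ℝ x (A x) : ℝ)) (hBpsd : ∀ x : V, 0 ≤ (inner ℝ x (B x) : ℝ))
    (G : V →ₗ[ℝ] V) (hG : IsMoorePenrose (A + B) G) :
    A ∘ₗ (G ∘ₗ B) = B ∘ₗ (G ∘ₗ A) ∧ (A ∘ₗ (G ∘ₗ B)).IsSymmetric := by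
  obtain ⟨h1, h2, h3, h4⟩ := hG
  set S : V →ₗ[ℝ] V := A + B with hSdef
  have hAsa : star A = A := (isSymmetric_iff_isSelfAdjoint A).mp hA
  have hBsa : star B = B := (isSymmetric_iff_isSelfAdjoint B).mp hB
  have hSsa : star S = S := (isSymmetric_iff_isSelfAdjoint S).mp (hA.add hB)
  have h1' : S * G * S = S := by rw [mul_assoc]; exact h1
  have h2' : G * S * G = G := by rw [mul_assoc]; exact h2
  have hSG : star (S * G) = S * G := (isSymmetric_iff_isSelfAdjoint (S * G)).mp h3
  have hGS : star (G * S) = G * S := (isSymmetric_iff_isSelfAdjoint (G * S)).mp h4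
  set H : V →ₗ[ℝ] V := star G with hHdef
  have e1 : H * S = S * G := by rw [← hSG, star_mul, hSsa]
  have e2 : S * H = G * S := by rw [← hGS, star_mul, hSsa]
  have hSHS : S * H * S = S := by
    have h := congrArg star h1'
    rwa [star_mul, star_mul, hSsa, ← hHdef, ← mul_assoc] at h
  have eSG : S * G = S * H := by
    have hstarSH : star (S * H) = S * H := by rw [e2, hGS]
    calc S * G = star (S * G) := hSG.symm
      _ = star (S * H * (S * G)) := by rw [← mul_assoc, hSHS]
      _ = star (S * G) * star (S * H) := by rw [star_mul]
      _ = S * G * (S * H) := by rw [hSG, hstarSH]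
      _ = S * H := by rw [← mul_assoc, h1']
  have eGS : G * S = H * S := by rw [← e2, e1, ← eSG]
  have hHGS : H * (G * S) = H := by
    have h := congrArg star h2'
    rwa [star_mul, hGS, ← hHdef] at h
  have hGstar : star G = G := by
    have hGH : G = H := by
      calc G = G * S * G := h2'.symm
        _ = H * S * G := by rw [eGS]
        _ = H * (S * G) := by rw [mul_assoc]
        _ = H * (S * H) := by rw [eSG]
        _ = H * (G * S) := by rw [e2]
        _ = H := hHGS
    exact hGH.symm
  have hcomm : S * G = G * S := by rw [eSG, ← e2]
  -- kernel of S is contained in kernels of A and B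
  have hker : ∀ x : V, S x = 0 → A x = 0 ∧ B x = 0 := by
    intro x hx
    have hS0 : (inner ℝ x (S x) : ℝ) = 0 := by rw [hx, inner_zero_right]
    have hsum : (inner ℝ x (A x) : ℝ) + inner ℝ x (B x) = 0 := by
      have : S x = A x + B x := rfl
      rw [this, inner_add_right] at hS0
      exact hS0
    have hA0 : (inner ℝ x (A x) : ℝ) = 0 := le_antisymm (by linarith [hBpsd x]) (hApsd x)
    have hB0 : (inner ℝ x (B x) : ℝ) = 0 := le_antisymm (by linarith [hApsd x]) (hBpsd x)
    exact ⟨psd_apply_eq_zero A hA hApsd x hA0, psd_apply_eq_zero B hB hBpsd x hB0⟩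
  have hptS : ∀ x : V, S (G (S x)) = S x := fun x => LinearMap.ext_iff.mp h1 x
  have hAGS : A * (G * S) = A := by
    ext x
    have h0 : S (G (S x) - x) = 0 := by rw [map_sub, hptS x, sub_self]
    have := (hker _ h0).1
    rw [map_sub, sub_eq_zero] at this
    simpa [mul_apply] using this
  have hBGS : B * (G * S) = B := by
    ext x
    have h0 : S (G (S x) - x) = 0 := by rw [map_sub, hptS x, sub_self]
    have := (hker _ h0).2
    rw [map_sub, sub_eq_zero] at this
    simpa [mul_apply] using this
  have hGSA : G * S * A = A := by
    have h := congrArg star hAGS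
    rwa [star_mul, hGS, hAsa] at h
  have hSGA : S * G * A = A := by rw [hcomm, hGSA]
  -- main computation
  have l1 : A * G * B + A * G * A = A := by
    have : A * G * B + A * G * A = A * G * (B + A) := by rw [mul_add]
    rw [this, show B + A = S from by rw [hSdef, add_comm], mul_assoc, hAGS]
  have l2 : B * G * A + A * G * A = A := by
    have : B * G * A + A * G * A = (B + A) * (G * A) := by
      rw [add_mul, mul_assoc, mul_assoc]
    rw [this, show B + A = S from by rw [hSdef, add_comm], ← mul_assoc, hSGA]
  have main : A * G * B = B * G * A := by
    have := l1.trans l2.symm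
    exact add_right_cancel this
  constructor
  · show A * (G * B) = B * (G * A)
    rw [← mul_assoc, ← mul_assoc, main]
  · apply (isSymmetric_iff_isSelfAdjoint (A ∘ₗ (G ∘ₗ B))).mpr
    show star (A * (G * B)) = A * (G * B)
    rw [star_mul, star_mul, hAsa, hBsa, hGstar]
    simp only [← mul_assoc]
    exact main.symm
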